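/- Consider the following sweep process on a colored point set P: process the points in increasing order of y-coordinate, maintaining a sequence L of points ordered by increasing x-coordinate, initially empty; insert each processed point into L at the position determined by its x-coordinate, and after each insertion repeatedly delete from L the points of any color c such that all points of color c are currently in L and form a block of consecutive entries of L, as long as such a color exists. Then P admits a planar bus realization in which every bus is a ⊓-bus if and only if L is empty after all points of P have been processed. -/

import Mathlib

open Set

/-- A colored point set: a finite set of points `P` with coordinates `x p`, `y p`
and colors `f p` in a finite color set `C`; the color map is surjective and no
two points share an x-coordinate or a y-coordinate. -/
structure CPS (P C : Type) [Fintype P] [Fintype C] where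
  x : P → ℝ
  y : P → ℝ
  f : P → C
  f_surj : Function.Surjective f
  x_inj : Function.Injective x
  y_inj : Function.Injective y

variable {P C : Type} [Fintype P] [Fintype C]

/-- Left end `x_l(c)` of the span of color `c`. -/
noncomputable def xl (S : CPS P C) (c : C) : ℝ :=
  sInf (S.x '' {p | S.f p = c})

/-- Right end `x_r(c)` of the span of color `c`. -/
noncomputable def xr (S : CPS P C) (c : C) : ℝ :=
  sSup (S.x '' {p | S.f p = c})

/-- The bus of color `c`: the horizontal segment at height `Y c` over the span of `c`. -/
def busSeg (S : CPS P C) (Y : C → ℝ) (c : C) : Set (ℝ × ℝ) :=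
  {q | q.2 = Y c ∧ q.1 ∈ Icc (xl S c) (xr S c)}

/-- The connection segment of point `p`: the vertical segment from `p` to its bus. -/
def connSeg (S : CPS P C) (Y : C → ℝ) (p : P) : Set (ℝ × ℝ) :=
  {q | q.1 = S.x p ∧ q.2 ∈ uIcc (S.y p) (Y (S.f p))}

/-- Planarity of a bus realization `Y`: no bus contains a point of a different
color, no bus intersects the connection segment of a point of a different color,
and no two connection segments of points of different colors intersect. -/
def PlanarBus (S : CPS P C) (Y : C → ℝ) : Prop :=
  (∀ (c : C) (p : P), S.f p ≠ c → (S.x p, S.y p) ∉ busSeg S Y c) ∧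
  (∀ (c : C) (p : P), S.f p ≠ c → Disjoint (busSeg S Y c) (connSeg S Y p)) ∧
  (∀ p q : P, S.f p ≠ S.f q → Disjoint (connSeg S Y p) (connSeg S Y q))

/-- Color `c` is removable from the current sweep list `A`: all points of color
`c` are currently in `A` and they form a block of consecutive entries of `A` in
x-order (every point of `A` lying in the span of `c` has color `c`). -/
def removable (S : CPS P C) (A : Finset P) (c : C) : Prop :=
  (∀ p : P, S.f p = c → p ∈ A) ∧
  (∀ q ∈ A, xl S c ≤ S.x q → S.x q ≤ xr S c → S.f q = c)

/-- One simplification step: delete from `A` the points of a removable color. -/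
def sweepStep [DecidableEq P] [DecidableEq C] (S : CPS P C) (A B : Finset P) : Prop :=
  ∃ c : C, removable S A c ∧ B = A.filter (fun p => S.f p ≠ c)

/-- `A` admits no further deletion. -/
def sweepReduced (S : CPS P C) (A : Finset P) : Prop :=
  ∀ c : C, ¬ removable S A c

/-- `B` is obtained from `A` by repeatedly deleting removable colors as long as
such a color exists. -/
def reducesTo [DecidableEq P] [DecidableEq C] (S : CPS P C) (A B : Finset P) : Prop :=
  Relation.ReflTransGen (sweepStep S) A B ∧ sweepReduced S B

set_option linter.unusedSectionVars false
set_option linter.unusedVariables false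

/- ===================== auxiliary ===================== -/

section Aux
variable [DecidableEq P] [DecidableEq C]

/-- A chain of sweep steps recorded as the list of deleted colors. -/
def StepChain (S : CPS P C) : Finset P → List C → Finset P → Prop
  | A, [], B => B = A
  | A, c :: cs, B => removable S A c ∧ StepChain S (A.filter (fun p => S.f p ≠ c)) cs B

lemma stepChain_concat (S : CPS P C) {A B : Finset P} {cs : List C} {c : C}
    (h : StepChain S A cs B) (hr : removable S B c) :
    StepChain S A (cs ++ [c]) (B.filter (fun p => S.f p ≠ c)) := by
  induction cs generalizing A with
  | nil => simp only [StepChain] at h; subst h; exact ⟨hr, rfl⟩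
  | cons d ds ih => exact ⟨h.1, ih h.2⟩

lemma stepChain_of_rtg (S : CPS P C) {A B : Finset P}
    (h : Relation.ReflTransGen (sweepStep S) A B) : ∃ cs, StepChain S A cs B := by
  induction h with
  | refl => exact ⟨[], rfl⟩
  | tail _ hstep ih =>
      obtain ⟨cs, hcs⟩ := ih
      obtain ⟨c, hr, hB⟩ := hstep
      exact ⟨cs ++ [c], hB ▸ stepChain_concat S hcs hr⟩

lemma rtg_subset (S : CPS P C) {A B : Finset P}
    (h : Relation.ReflTransGen (sweepStep S) A B) : B ⊆ A := by
  induction h with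
  | refl => exact Finset.Subset.refl _
  | tail _ hstep ih =>
      obtain ⟨c, _, hB⟩ := hstep
      exact hB ▸ (Finset.filter_subset _ _).trans ih

/-- Invariant of the sweep: `E` records the deleted colors in order, together with
the number of points that had been inserted at deletion time. -/
def GoodE (S : CPS P C) (pts : List P) (i : ℕ) (A : Finset P) (E : List (C × ℕ)) : Prop :=
  (E.map Prod.fst).Nodup ∧
  (E.map Prod.snd).Pairwise (· ≤ ·) ∧
  (∀ e ∈ E, e.2 ≤ i) ∧
  A = (pts.take i).toFinset.filter (fun p => S.f p ∉ E.map Prod.fst) ∧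
  (∀ (j : ℕ) (hj : j < E.length),
    (∀ p : P, S.f p = (E[j]'hj).1 → p ∈ (pts.take (E[j]'hj).2).toFinset) ∧
    (∀ q : P, S.f q ≠ (E[j]'hj).1 → xl S (E[j]'hj).1 ≤ S.x q → S.x q ≤ xr S (E[j]'hj).1 →
      q ∉ (pts.take (E[j]'hj).2).toFinset ∨
        ∃ (j' : ℕ) (hj' : j' < E.length), j' < j ∧ (E[j']'hj').1 = S.f q))

end Aux

section Aux2
variable [DecidableEq P] [DecidableEq C]

lemma goodE_step (S : CPS P C) (pts : List P) {i : ℕ} {A : Finset P} {E : List (C × ℕ)}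
    {c : C} (hG : GoodE S pts i A E) (hr : removable S A c) :
    GoodE S pts i (A.filter (fun p => S.f p ≠ c)) (E ++ [(c, i)]) := by
  obtain ⟨hnD, hsD, hbD, hA, hQ⟩ := hG
  have hcF : c ∉ E.map Prod.fst := by
    obtain ⟨p₀, hp₀⟩ := S.f_surj c
    have := hr.1 p₀ hp₀
    rw [hA, Finset.mem_filter] at this
    exact hp₀ ▸ this.2
  have hAsub : A ⊆ (pts.take i).toFinset := by
    rw [hA]; exact Finset.filter_subset _ _
  refine ⟨?_, ?_, ?_, ?_, ?_⟩
  · rw [List.map_append]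
    simp only [List.map_cons, List.map_nil]
    rw [List.nodup_append]
    exact ⟨hnD, List.nodup_singleton c, by
      intro a ha b hb h; simp only [List.mem_singleton] at hb; subst hb; subst h; exact hcF ha⟩
  · rw [List.map_append]
    simp only [List.map_cons, List.map_nil]
    rw [List.pairwise_append]
    refine ⟨hsD, List.pairwise_singleton _ _, ?_⟩
    intro a ha b hb
    simp only [List.mem_singleton] at hb
    subst hb
    obtain ⟨e, he, rfl⟩ := List.mem_map.1 ha
    exact hbD e he
  · intro e he
    rcases List.mem_append.1 he with h | h
    · exact hbD e h
    · simp only [List.mem_singleton] at h; subst h; exact le_refl _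
  · rw [hA, Finset.filter_filter]
    apply Finset.filter_congr
    intro p _
    simp only [List.map_append, List.map_cons, List.map_nil, List.mem_append,
      List.mem_singleton, eq_iff_iff]
    tauto
  · intro j hj
    rw [List.length_append, List.length_singleton] at hj
    rcases Nat.lt_or_ge j E.length with hjE | hjE
    · have hget : (E ++ [(c, i)])[j]'(by rw [List.length_append]; omega) = E[j]'hjE :=
        List.getElem_append_left _
      rw [hget]
      refine ⟨(hQ j hjE).1, ?_⟩
      intro q hq1 hq2 hq3
      rcases (hQ j hjE).2 q hq1 hq2 hq3 with h | ⟨j', hj', hlt, heq⟩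
      · exact Or.inl h
      · refine Or.inr ⟨j', by rw [List.length_append]; omega, hlt, ?_⟩
        rw [List.getElem_append_left hj', heq]
    · have hjeq : j = E.length := by omega
      subst hjeq
      have hget : (E ++ [(c, i)])[E.length]'(by simp) = (c, i) := by
        rw [List.getElem_append_right (le_refl _)]
        simp
      rw [hget]
      constructor
      · intro p hp
        exact hAsub (hr.1 p hp)
      · intro q hq1 hq2 hq3
        by_cases hqt : q ∈ (pts.take i).toFinset
        · by_cases hqF : S.f q ∈ E.map Prod.fst
          · obtain ⟨j', hj', heq⟩ := List.getElem_of_mem hqF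
            rw [List.length_map] at hj'
            refine Or.inr ⟨j', by rw [List.length_append]; omega, hj', ?_⟩
            rw [List.getElem_append_left hj']
            rw [List.getElem_map] at heq
            exact heq
          · have hqA : q ∈ A := by rw [hA, Finset.mem_filter]; exact ⟨hqt, hqF⟩
            exact absurd (hr.2 q hqA hq2 hq3) hq1
        · exact Or.inl hqt

lemma goodE_chain (S : CPS P C) (pts : List P) {i : ℕ} {A B : Finset P} {E : List (C × ℕ)}
    {cs : List C} (hG : GoodE S pts i A E) (hc : StepChain S A cs B) :
    GoodE S pts i B (E ++ cs.map (fun c => (c, i))) := by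
  induction cs generalizing A E with
  | nil => simp only [StepChain] at hc; subst hc; simpa using hG
  | cons d ds ih =>
      have h1 := goodE_step S pts hG hc.1
      have h2 := ih h1 hc.2
      simpa using h2

end Aux2

section Aux3
variable [DecidableEq P] [DecidableEq C]
variable {S : CPS P C} {pts : List P}

lemma mem_take_iff (hnd : pts.Nodup) (hall : ∀ p : P, p ∈ pts) {p : P} {k : ℕ} :
    p ∈ (pts.take k).toFinset ↔ pts.idxOf p < k := by
  constructor
  · intro h
    rw [List.mem_toFinset] at h
    obtain ⟨a, ha, hea⟩ := List.getElem_of_mem h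
    have halen : a < pts.length ∧ a < k := by
      rw [List.length_take] at ha; omega
    rw [List.getElem_take] at hea
    have hidx : pts[pts.idxOf p]'(List.idxOf_lt_length_iff.2 (hall p)) = p :=
      List.getElem_idxOf _
    have := (List.Nodup.getElem_inj_iff hnd).1 (hidx.trans hea.symm)
    omega
  · intro h
    rw [List.mem_toFinset]
    have hlt : pts.idxOf p < pts.length := List.idxOf_lt_length_iff.2 (hall p)
    have hidx : pts[pts.idxOf p]'hlt = p := List.getElem_idxOf _
    rw [List.getElem_take' hlt h] at hidx
    exact hidx ▸ List.getElem_mem _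

lemma y_lt_iff_idx_lt (S : CPS P C) (hnd : pts.Nodup) (hall : ∀ p : P, p ∈ pts)
    (hsort : pts.Pairwise (fun p q => S.y p < S.y q)) {p q : P} :
    pts.idxOf p < pts.idxOf q ↔ S.y p < S.y q := by
  have key : ∀ r s : P, pts.idxOf r < pts.idxOf s → S.y r < S.y s := by
    intro r s hrs
    have hs : pts.idxOf s < pts.length := List.idxOf_lt_length_iff.2 (hall s)
    have h1 : pts[pts.idxOf r]'(by omega) = r := List.getElem_idxOf _
    have h2 : pts[pts.idxOf s]'hs = s := List.getElem_idxOf _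
    have := List.pairwise_iff_getElem.1 hsort _ _ (by omega) hs hrs
    rwa [h1, h2] at this
  constructor
  · exact key p q
  · intro h
    rcases lt_trichotomy (pts.idxOf p) (pts.idxOf q) with h' | h' | h'
    · exact h'
    · exfalso
      have : p = q := by
        have hp : pts[pts.idxOf p]'(List.idxOf_lt_length_iff.2 (hall p)) = p :=
          List.getElem_idxOf _
        have hq : pts[pts.idxOf q]'(List.idxOf_lt_length_iff.2 (hall q)) = q :=
          List.getElem_idxOf _
        rw [← hp, ← hq]; congr 1
      exact absurd (this ▸ h) (lt_irrefl _)
    · exact absurd (key q p h') (not_lt.2 h.le)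

/-- rank in the y-order equals position in the sorted list -/
lemma rank_eq_idx (S : CPS P C) (hnd : pts.Nodup) (hall : ∀ p : P, p ∈ pts)
    (hsort : pts.Pairwise (fun p q => S.y p < S.y q)) (p : P) :
    (Finset.univ.filter (fun q => S.y q < S.y p)).card = pts.idxOf p := by
  have hset : Finset.univ.filter (fun q => S.y q < S.y p)
      = (pts.take (pts.idxOf p)).toFinset := by
    ext q
    rw [Finset.mem_filter, mem_take_iff hnd hall]
    simp only [Finset.mem_univ, true_and]
    exact (y_lt_iff_idx_lt S hnd hall hsort).symm
  rw [hset, List.card_toFinset, List.Nodup.dedup (hnd.sublist (List.take_sublist _ _)),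
    List.length_take]
  have := List.idxOf_lt_length_iff.2 (hall p)
  omega

lemma mem_take_count_iff (S : CPS P C) (hnd : pts.Nodup) (hall : ∀ p : P, p ∈ pts)
    (hsort : pts.Pairwise (fun p q => S.y p < S.y q)) (t : ℝ) (p : P) :
    p ∈ (pts.take ((Finset.univ.filter (fun q => S.y q < t)).card)).toFinset ↔ S.y p < t := by
  rw [mem_take_iff hnd hall, ← rank_eq_idx S hnd hall hsort]
  constructor
  · intro h
    by_contra hyp
    push_neg at hyp
    have : Finset.univ.filter (fun q => S.y q < t)
        ⊆ Finset.univ.filter (fun q => S.y q < S.y p) := by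
      intro q hq
      rw [Finset.mem_filter] at *
      exact ⟨hq.1, lt_of_lt_of_le hq.2 hyp⟩
    exact absurd (Finset.card_le_card this) (by omega)
  · intro h
    have hsub : insert p (Finset.univ.filter (fun q => S.y q < S.y p))
        ⊆ Finset.univ.filter (fun q => S.y q < t) := by
      intro q hq
      rw [Finset.mem_insert] at hq
      rw [Finset.mem_filter]
      rcases hq with rfl | hq
      · exact ⟨Finset.mem_univ _, h⟩
      · rw [Finset.mem_filter] at hq
        exact ⟨hq.1, hq.2.trans h⟩
    have hnotmem : p ∉ Finset.univ.filter (fun q => S.y q < S.y p) := by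
      simp
    have := Finset.card_le_card hsub
    rw [Finset.card_insert_of_notMem hnotmem] at this
    omega

end Aux3

section Aux4
variable [DecidableEq P] [DecidableEq C]
variable {S : CPS P C} {pts : List P}

lemma goodE_insert (S : CPS P C) (hnd : pts.Nodup) (hall : ∀ p : P, p ∈ pts)
    {i : ℕ} (hi : i < pts.length) {A : Finset P} {E : List (C × ℕ)}
    (hG : GoodE S pts i A E) :
    GoodE S pts (i + 1) (insert (pts[i]'hi) A) E := by
  obtain ⟨hnD, hsD, hbD, hA, hQ⟩ := hG
  have hrt : pts[i]'hi ∉ (pts.take i).toFinset := by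
    rw [mem_take_iff hnd hall]
    intro hlt
    have h1 : pts[pts.idxOf (pts[i]'hi)]'(List.idxOf_lt_length_iff.2 (hall _)) = pts[i]'hi :=
      List.getElem_idxOf _
    have := (List.Nodup.getElem_inj_iff hnd).1 h1
    omega
  have hfr : S.f (pts[i]'hi) ∉ E.map Prod.fst := by
    intro hmem
    obtain ⟨j, hj, heq⟩ := List.getElem_of_mem hmem
    rw [List.length_map] at hj
    rw [List.getElem_map] at heq
    have h1 := (hQ j hj).1 (pts[i]'hi) heq.symm
    have h2 : (pts.take (E[j]'hj).2).toFinset ⊆ (pts.take i).toFinset := by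
      intro q hq
      rw [mem_take_iff hnd hall] at *
      exact lt_of_lt_of_le hq (hbD _ (List.getElem_mem _))
    exact hrt (h2 h1)
  have htake : (pts.take (i + 1)).toFinset = insert (pts[i]'hi) (pts.take i).toFinset := by
    ext q
    rw [mem_take_iff hnd hall, Finset.mem_insert, mem_take_iff hnd hall]
    constructor
    · intro h
      rcases Nat.lt_or_ge (pts.idxOf q) i with h' | h'
      · exact Or.inr h'
      · left
        have hq : pts.idxOf q = i := by omega
        have := List.getElem_idxOf (xs := pts) (x := q) (List.idxOf_lt_length_iff.2 (hall q))
        rw [← this]; congr 1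
    · rintro (rfl | h)
      · have h1 : pts[pts.idxOf (pts[i]'hi)]'(List.idxOf_lt_length_iff.2 (hall _)) = pts[i]'hi :=
          List.getElem_idxOf _
        have := (List.Nodup.getElem_inj_iff hnd).1 h1
        omega
      · omega
  refine ⟨hnD, hsD, fun e he => (hbD e he).trans (Nat.le_succ i), ?_, hQ⟩
  rw [htake, Finset.filter_insert, if_pos hfr, hA]

lemma exists_goodE (S : CPS P C) (hnd : pts.Nodup) (hall : ∀ p : P, p ∈ pts)
    (L : ℕ → Finset P) (hL0 : L 0 = ∅)
    (hLstep : ∀ (i : ℕ) (h : i < pts.length),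
      reducesTo S (insert (pts.get ⟨i, h⟩) (L i)) (L (i + 1))) :
    ∀ i, i ≤ pts.length → ∃ E, GoodE S pts i (L i) E := by
  intro i
  induction i with
  | zero =>
      intro _
      exact ⟨[], by simp [GoodE, hL0]⟩
  | succ i ih =>
      intro hi
      obtain ⟨E, hE⟩ := ih (by omega)
      have hilt : i < pts.length := by omega
      obtain ⟨cs, hcs⟩ := stepChain_of_rtg S (hLstep i hilt).1
      have h1 := goodE_insert S hnd hall hilt hE
      rw [List.get_eq_getElem] at hcs
      exact ⟨E ++ cs.map (fun c => (c, i + 1)), goodE_chain S pts h1 hcs⟩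

lemma absent_mono (S : CPS P C) (hnd : pts.Nodup) (hall : ∀ p : P, p ∈ pts)
    (L : ℕ → Finset P)
    (hLstep : ∀ (i : ℕ) (h : i < pts.length),
      reducesTo S (insert (pts.get ⟨i, h⟩) (L i)) (L (i + 1)))
    {p : P} {i : ℕ} (hp : p ∈ (pts.take i).toFinset) (hnp : p ∉ L i) :
    ∀ j, i ≤ j → j ≤ pts.length → p ∉ L j := by
  intro j
  induction j with
  | zero => intro hij _; exact (Nat.le_zero.1 hij) ▸ hnp
  | succ j ih =>
      intro hij hjn
      rcases Nat.lt_or_ge i (j + 1) with hlt | hge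
      · have hij' : i ≤ j := by omega
        have hjlt : j < pts.length := by omega
        have hnpj := ih hij' (by omega)
        have hsub : L (j + 1) ⊆ insert (pts.get ⟨j, hjlt⟩) (L j) :=
          rtg_subset S (hLstep j hjlt).1
        intro hmem
        rcases Finset.mem_insert.1 (hsub hmem) with heq | hmem'
        · have heq' : pts[j]'hjlt = p := by simpa using heq.symm
          have hidx : pts.idxOf p < i := (mem_take_iff hnd hall).1 hp
          have h1 : pts[pts.idxOf (pts[j]'hjlt)]'(List.idxOf_lt_length_iff.2 (hall _))
              = pts[j]'hjlt := List.getElem_idxOf _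
          have h2 := (List.Nodup.getElem_inj_iff hnd).1 h1
          rw [← heq'] at hidx
          omega
        · exact hnpj hmem'
      · have : i = j + 1 := by omega
        exact this ▸ hnp

end Aux4

section Main
variable [DecidableEq P] [DecidableEq C]
variable {S : CPS P C} {pts : List P}

lemma dir_mp (S : CPS P C) (hnd : pts.Nodup) (hall : ∀ p : P, p ∈ pts)
    (hsort : pts.Pairwise (fun p q => S.y p < S.y q))
    (L : ℕ → Finset P) (hL0 : L 0 = ∅)
    (hLstep : ∀ (i : ℕ) (h : i < pts.length),
      reducesTo S (insert (pts.get ⟨i, h⟩) (L i)) (L (i + 1)))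
    (Y : C → ℝ) (hPB : PlanarBus S Y) (hpi : ∀ p : P, S.y p < Y (S.f p)) :
    L pts.length = ∅ := by
  classical
  by_contra hne
  obtain ⟨phat, hphat⟩ := Finset.nonempty_iff_ne_empty.2 hne
  have hcardn : Fintype.card P ≤ pts.length := by
    have h1 : pts.toFinset = Finset.univ := by ext p; simp [hall p]
    calc Fintype.card P = pts.toFinset.card := by rw [h1, Finset.card_univ]
    _ ≤ pts.length := pts.toFinset_card_le
  set s : C → ℕ := fun c => (Finset.univ.filter (fun q => S.y q < Y c)).card with hs
  have hsn : ∀ c : C, s c ≤ pts.length := by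
    intro c
    calc s c ≤ Finset.univ.card := Finset.card_filter_le _ _
    _ ≤ pts.length := hcardn
  have hGE := exists_goodE S hnd hall L hL0 hLstep
  have hJ1 : ∀ i, i ≤ pts.length → L i ⊆ (pts.take i).toFinset := by
    intro i hi
    obtain ⟨E, hE⟩ := hGE i hi
    rw [hE.2.2.2.1]
    exact Finset.filter_subset _ _
  have hJ2 : ∀ i, i ≤ pts.length → ∀ p q : P, S.f p = S.f q →
      p ∈ (pts.take i).toFinset → q ∈ L i → p ∈ L i := by
    intro i hi p q hfpq hpt hqL
    obtain ⟨E, hE⟩ := hGE i hi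
    rw [hE.2.2.2.1] at hqL ⊢
    rw [Finset.mem_filter] at hqL
    exact Finset.mem_filter.2 ⟨hpt, hfpq ▸ hqL.2⟩
  have hmemn : ∀ p : P, p ∈ (pts.take pts.length).toFinset := by
    intro p; rw [List.take_length, List.mem_toFinset]; exact hall p
  have hWmem : ∀ c : C, ∀ q : P, q ∈ L (s c) → S.y q < Y c := by
    intro c q hq
    exact (mem_take_count_iff S hnd hall hsort (Y c) q).1 (hJ1 (s c) (hsn c) hq)
  set W : C → Prop := fun c => ∀ p : P, S.f p = c → p ∈ L (s c) with hW
  have hWc : ∀ c : C, (∀ p : P, S.f p = c → p ∈ L pts.length) → W c := by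
    intro c hc p hp
    have hpt : p ∈ (pts.take (s c)).toFinset :=
      (mem_take_count_iff S hnd hall hsort (Y c) p).2 (hp ▸ hpi p)
    by_contra hnp
    exact absurd (hc p hp)
      (absent_mono S hnd hall L hLstep hpt hnp pts.length (hsn c) le_rfl)
  have hW0 : W (S.f phat) := by
    apply hWc
    intro p hp
    exact hJ2 pts.length le_rfl p phat hp (hmemn p) hphat
  obtain ⟨chat, hcW, hmin⟩ : ∃ c, W c ∧ ∀ d, W d → Y c ≤ Y d := by
    obtain ⟨c, hc, hmin⟩ := Finset.exists_min_image (Finset.univ.filter fun c => W c) Y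
      ⟨S.f phat, Finset.mem_filter.2 ⟨Finset.mem_univ _, hW0⟩⟩
    exact ⟨c, (Finset.mem_filter.1 hc).2, fun d hd => hmin d (Finset.mem_filter.2 ⟨Finset.mem_univ _, hd⟩)⟩
  have hs1 : 1 ≤ s chat := by
    obtain ⟨p₀, hp₀⟩ := S.f_surj chat
    apply Finset.card_pos.2
    exact ⟨p₀, Finset.mem_filter.2 ⟨Finset.mem_univ _, hp₀ ▸ hpi p₀⟩⟩
  have hred : sweepReduced S (L (s chat)) := by
    have h := (hLstep (s chat - 1) (by have := hsn chat; omega)).2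
    rwa [Nat.sub_add_cancel hs1] at h
  have hnotall : ¬ ∀ q ∈ L (s chat), xl S chat ≤ S.x q → S.x q ≤ xr S chat → S.f q = chat :=
    fun h => hred chat ⟨hcW, h⟩
  push_neg at hnotall
  obtain ⟨q, hqL, hxlq, hxrq, hfq⟩ := hnotall
  have hyq : S.y q < Y chat := hWmem chat q hqL
  have hdY : Y (S.f q) < Y chat := by
    by_contra hle
    push_neg at hle
    have hz1 : ((S.x q, Y chat) : ℝ × ℝ) ∈ busSeg S Y chat := ⟨rfl, hxlq, hxrq⟩
    have hz2 : ((S.x q, Y chat) : ℝ × ℝ) ∈ connSeg S Y q :=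
      ⟨rfl, Set.mem_uIcc.2 (Or.inl ⟨hyq.le, hle⟩)⟩
    exact Set.disjoint_left.1 (hPB.2.1 chat q hfq) hz1 hz2
  have hsdsc : s (S.f q) ≤ s chat := by
    apply Finset.card_le_card
    intro r hr
    rw [Finset.mem_filter] at *
    exact ⟨hr.1, hr.2.trans hdY⟩
  have hdW : W (S.f q) := by
    intro p hp
    have hyp : S.y p < Y (S.f q) := hp ▸ hpi p
    have hpsc : p ∈ (pts.take (s chat)).toFinset :=
      (mem_take_count_iff S hnd hall hsort (Y chat) p).2 (hyp.trans hdY)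
    have hpsd : p ∈ (pts.take (s (S.f q))).toFinset :=
      (mem_take_count_iff S hnd hall hsort (Y (S.f q)) p).2 hyp
    have hpLc : p ∈ L (s chat) := hJ2 (s chat) (hsn chat) p q hp hpsc hqL
    by_contra hnp
    exact absurd hpLc
      (absent_mono S hnd hall L hLstep hpsd hnp (s chat) hsdsc (hsn chat))
  exact absurd hdY (not_lt.2 (hmin (S.f q) hdW))

end Main

section Main2
variable [DecidableEq P] [DecidableEq C]
variable {S : CPS P C} {pts : List P}

lemma dir_mpr (S : CPS P C) (hnd : pts.Nodup) (hall : ∀ p : P, p ∈ pts)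
    (hsort : pts.Pairwise (fun p q => S.y p < S.y q))
    (L : ℕ → Finset P) (hL0 : L 0 = ∅)
    (hLstep : ∀ (i : ℕ) (h : i < pts.length),
      reducesTo S (insert (pts.get ⟨i, h⟩) (L i)) (L (i + 1)))
    (hLn : L pts.length = ∅) :
    ∃ Y : C → ℝ, Function.Injective Y ∧ PlanarBus S Y ∧ ∀ p : P, S.y p < Y (S.f p) := by
  classical
  by_cases hCE : IsEmpty C
  · exact ⟨fun c => (hCE.false c).elim, fun a => (hCE.false a).elim,
      ⟨fun c => (hCE.false c).elim, fun c => (hCE.false c).elim,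
       fun p q _ => (hCE.false (S.f p)).elim⟩, fun p => (hCE.false (S.f p)).elim⟩
  rw [not_isEmpty_iff] at hCE
  obtain ⟨E, hG⟩ := exists_goodE S hnd hall L hL0 hLstep pts.length le_rfl
  rw [hLn] at hG
  obtain ⟨hnD, hsD, hbD, hA, hQ⟩ := hG
  set F := E.map Prod.fst with hF
  have hFlen : F.length = E.length := List.length_map _
  have hFall : ∀ c : C, c ∈ F := by
    intro c
    obtain ⟨p, hp⟩ := S.f_surj c
    have hpt : p ∈ (pts.take pts.length).toFinset := by
      rw [List.take_length, List.mem_toFinset]; exact hall p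
    by_contra hcF
    have h2 : p ∈ (pts.take pts.length).toFinset.filter (fun p => S.f p ∉ F) :=
      Finset.mem_filter.2 ⟨hpt, by rw [hp]; exact hcF⟩
    rw [← hA] at h2
    exact absurd h2 (Finset.notMem_empty p)
  have hτlt : ∀ c : C, F.idxOf c < E.length :=
    fun c => hFlen ▸ List.idxOf_lt_length_iff.2 (hFall c)
  set τ : C → ℕ := fun c => F.idxOf c with hτdef
  have hτlt' : ∀ c : C, τ c < E.length := hτlt
  have hEτ : ∀ c : C, (E[τ c]'(hτlt' c)).1 = c := by
    intro c
    have h1 : F[τ c]'(hFlen ▸ hτlt' c) = c := List.getElem_idxOf _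
    have h2 : F[τ c]'(hFlen ▸ hτlt' c) = (E[τ c]'(hτlt' c)).1 := List.getElem_map _
    exact h2.symm.trans h1
  set K : C → ℕ := fun c => (E[τ c]'(hτlt' c)).2 with hKdef
  have Q1' : ∀ (c : C) (p : P), S.f p = c → p ∈ (pts.take (K c)).toFinset :=
    fun c p hp => (hQ (τ c) (hτlt' c)).1 p (by rw [hEτ c]; exact hp)
  have Q2' : ∀ (c : C) (q : P), S.f q ≠ c → xl S c ≤ S.x q → S.x q ≤ xr S c →
      q ∉ (pts.take (K c)).toFinset ∨ τ (S.f q) < τ c := by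
    intro c q h1 h2 h3
    have hres := (hQ (τ c) (hτlt' c)).2 q (by rw [hEτ c]; exact h1)
      (by rw [hEτ c]; exact h2) (by rw [hEτ c]; exact h3)
    rcases hres with h | ⟨j', hj', hlt, heq⟩
    · exact Or.inl h
    · right
      have hτfq : τ (S.f q) = j' := by
        apply (List.Nodup.getElem_inj_iff hnD).1
        show F[τ (S.f q)]'(hFlen ▸ hτlt' _) = F[j']'(hFlen ▸ hj')
        rw [List.getElem_idxOf]
        have h2 : F[j']'(hFlen ▸ hj') = (E[j']'hj').1 := List.getElem_map _
        rw [h2]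
        exact heq.symm
      omega
  have hτinj : ∀ c d : C, τ c = τ d → c = d := by
    intro c d h
    have h1 : F[τ c]? = some c := by
      rw [List.getElem?_eq_getElem (hFlen ▸ hτlt' c), List.getElem_idxOf]
    have h2 : F[τ d]? = some d := by
      rw [List.getElem?_eq_getElem (hFlen ▸ hτlt' d), List.getElem_idxOf]
    rw [h, h2] at h1
    exact (Option.some_injective _ h1).symm
  -- the minimal gap between distinct y-coordinates
  set G : Finset ℝ :=
    insert 1 ((Finset.univ.offDiag).image (fun pq : P × P => |S.y pq.1 - S.y pq.2|)) with hGdef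
  have hGne : G.Nonempty := ⟨1, Finset.mem_insert_self _ _⟩
  set g : ℝ := G.min' hGne with hgdef
  have hg0 : 0 < g := by
    rw [hgdef]
    apply (Finset.lt_min'_iff _ _).2
    intro y hy
    rcases Finset.mem_insert.1 hy with rfl | hy
    · norm_num
    · obtain ⟨pq, hpq, rfl⟩ := Finset.mem_image.1 hy
      have hne : pq.1 ≠ pq.2 := (Finset.mem_offDiag.1 hpq).2.2
      exact abs_pos.2 (sub_ne_zero.2 (fun h => hne (S.y_inj h)))
  have hgle : ∀ p q : P, p ≠ q → g ≤ |S.y p - S.y q| := by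
    intro p q h
    apply Finset.min'_le
    exact Finset.mem_insert_of_mem (Finset.mem_image.2
      ⟨(p, q), Finset.mem_offDiag.2 ⟨Finset.mem_univ _, Finset.mem_univ _, h⟩, rfl⟩)
  set M : ℕ := E.length with hMdef
  set ε : ℝ := g / (2 * (M + 1)) with hεdef
  have hε0 : 0 < ε := div_pos hg0 (by positivity)
  have hεbound : ∀ c : C, ε * (τ c + 1) < g := by
    intro c
    have h1 : (τ c : ℝ) + 1 ≤ (M : ℝ) + 1 := by
      have h2 : τ c + 1 ≤ M + 1 := Nat.succ_le_succ (hτlt' c).le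
      exact_mod_cast h2
    have h3 : ε * ((τ c : ℝ) + 1) ≤ ε * ((M : ℝ) + 1) :=
      mul_le_mul_of_nonneg_left h1 hε0.le
    have h4 : ε * ((M : ℝ) + 1) = g / 2 := by
      rw [hεdef]
      have : (2 : ℝ) * ((M : ℝ) + 1) ≠ 0 := by positivity
      field_simp
    linarith
  set B : C → ℝ := fun c => sSup (S.y '' {p : P | p ∈ pts.take (K c)}) with hBdef
  have hfin : ∀ c : C, (S.y '' {p : P | p ∈ pts.take (K c)}).Finite :=
    fun c => (Set.toFinite _).image _
  have hnev : ∀ c : C, (S.y '' {p : P | p ∈ pts.take (K c)}).Nonempty := by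
    intro c
    obtain ⟨p, hp⟩ := S.f_surj c
    have h1 := Q1' c p hp
    rw [List.mem_toFinset] at h1
    exact ⟨S.y p, p, h1, rfl⟩
  have hBattain : ∀ c : C, ∃ p : P, p ∈ (pts.take (K c)).toFinset ∧ S.y p = B c := by
    intro c
    obtain ⟨p, hp, hep⟩ := (hnev c).csSup_mem (hfin c)
    exact ⟨p, List.mem_toFinset.2 hp, hep⟩
  have hBle : ∀ (c : C) (p : P), p ∈ (pts.take (K c)).toFinset → S.y p ≤ B c := by
    intro c p hp
    exact le_csSup ((hfin c).bddAbove) ⟨p, List.mem_toFinset.1 hp, rfl⟩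
  set Y : C → ℝ := fun c => B c + ε * (τ c + 1) with hYdef
  have hYgtB : ∀ c : C, B c < Y c := by
    intro c
    have h1 : (0 : ℝ) < ε * (τ c + 1) := by positivity
    rw [hYdef]; simp only; linarith
  have hYltBg : ∀ c : C, Y c < B c + g := by
    intro c
    have := hεbound c
    rw [hYdef]; simp only; linarith
  have hpi : ∀ p : P, S.y p < Y (S.f p) :=
    fun p => lt_of_le_of_lt (hBle _ p (Q1' _ p rfl)) (hYgtB _)
  have hgap : ∀ (c : C) (p : P), p ∉ (pts.take (K c)).toFinset → B c + g ≤ S.y p := by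
    intro c p hp
    obtain ⟨p₀, hp₀t, hp₀e⟩ := hBattain c
    have hne' : p ≠ p₀ := fun h => hp (h ▸ hp₀t)
    have hidx : pts.idxOf p₀ < K c := (mem_take_iff hnd hall).1 hp₀t
    have hidx' : ¬ pts.idxOf p < K c := fun h => hp ((mem_take_iff hnd hall).2 h)
    have hyy : S.y p₀ < S.y p := (y_lt_iff_idx_lt S hnd hall hsort).1 (by omega)
    have h3 := hgle p p₀ hne'
    rw [abs_of_pos (by linarith)] at h3
    linarith
  have hYne : ∀ (c : C) (p : P), S.y p ≠ Y c := by
    intro c p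
    by_cases hp : p ∈ (pts.take (K c)).toFinset
    · exact ne_of_lt (lt_of_le_of_lt (hBle c p hp) (hYgtB c))
    · have h1 := hgap c p hp
      have h2 := hYltBg c
      exact ne_of_gt (by linarith)
  have hKmono : ∀ c d : C, τ c < τ d → K c ≤ K d := by
    intro c d hlt
    have h1 := List.pairwise_iff_getElem.1 hsD (τ c) (τ d)
      (by rw [List.length_map]; exact lt_trans hlt (hτlt' d))
      (by rw [List.length_map]; exact hτlt' d) hlt
    rw [List.getElem_map, List.getElem_map] at h1
    exact h1
  have hYmono : ∀ c d : C, τ c < τ d → Y c < Y d := by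
    intro c d h
    have hK := hKmono c d h
    have hBcd : B c ≤ B d := by
      obtain ⟨p₀, hp₀t, hp₀e⟩ := hBattain c
      have hmem : p₀ ∈ (pts.take (K d)).toFinset := by
        rw [mem_take_iff hnd hall] at *
        omega
      linarith [hBle d p₀ hmem]
    rcases eq_or_lt_of_le hBcd with heq | hlt
    · have hcast : (τ c : ℝ) + 1 < (τ d : ℝ) + 1 := by exact_mod_cast Nat.succ_lt_succ h
      have h1 : ε * ((τ c : ℝ) + 1) < ε * ((τ d : ℝ) + 1) :=
        mul_lt_mul_of_pos_left hcast hε0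
      rw [hYdef]; simp only; linarith
    · have h3 : B c + g ≤ B d := by
        obtain ⟨p₀, hp₀t, hp₀e⟩ := hBattain c
        obtain ⟨p₁, hp₁t, hp₁e⟩ := hBattain d
        have hne' : p₁ ≠ p₀ := by
          intro h'
          rw [h', hp₀e] at hp₁e
          linarith
        have h4 := hgle p₁ p₀ hne'
        rw [abs_of_pos (by linarith)] at h4
        linarith
      have h5 := hYgtB d
      have h6 := hYltBg c
      linarith
  have hYinj : Function.Injective Y := by
    intro c d h
    by_contra hne'
    have hττ : τ c ≠ τ d := fun h' => hne' (hτinj c d h')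
    rcases Nat.lt_or_ge (τ c) (τ d) with h' | h'
    · exact absurd h (ne_of_lt (hYmono c d h'))
    · exact absurd h.symm (ne_of_lt (hYmono d c (by omega)))
  refine ⟨Y, hYinj, ⟨?_, ?_, ?_⟩, hpi⟩
  · rintro c p _ ⟨h1, _⟩
    exact hYne c p h1
  · rintro c q hne'
    rw [Set.disjoint_left]
    rintro z ⟨hz2, hzx⟩ ⟨hz1, hzu⟩
    rw [hz1] at hzx
    rw [Set.uIcc_of_le (le_of_lt (hpi q))] at hzu
    rcases Q2' c q hne' hzx.1 hzx.2 with hout | hlt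
    · have hgq := hgap c q hout
      have hYlt : Y c < S.y q := lt_of_lt_of_le (hYltBg c) hgq
      have h7 : S.y q ≤ z.2 := hzu.1
      rw [hz2] at h7
      linarith
    · have h8 := hYmono (S.f q) c hlt
      have hub : z.2 ≤ Y (S.f q) := hzu.2
      rw [hz2] at hub
      linarith
  · intro p q hne'
    rw [Set.disjoint_left]
    rintro z ⟨hz1, _⟩ ⟨hz1', _⟩
    exact hne' (congrArg S.f (S.x_inj (hz1.symm.trans hz1')))

end Main2


/-- the sweep process (insert the points in increasing y-order and
repeatedly delete complete consecutive color blocks) ends with an empty list iff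
the point set admits a planar bus realization consisting only of ⊓-buses. -/
theorem stmt5 {P C : Type} [Fintype P] [Fintype C] [DecidableEq P] [DecidableEq C]
    (S : CPS P C) (pts : List P) (hnd : pts.Nodup) (hall : ∀ p : P, p ∈ pts)
    (hsort : pts.Pairwise (fun p q => S.y p < S.y q))
    (L : ℕ → Finset P) (hL0 : L 0 = ∅)
    (hLstep : ∀ (i : ℕ) (h : i < pts.length),
      reducesTo S (insert (pts.get ⟨i, h⟩) (L i)) (L (i + 1))) :
    (∃ Y : C → ℝ, Function.Injective Y ∧ PlanarBus S Y ∧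
      ∀ p : P, S.y p < Y (S.f p)) ↔ L pts.length = ∅ := by
  constructor
  · rintro ⟨Y, _, hPB, hpi⟩
    exact dir_mp S hnd hall hsort L hL0 hLstep Y hPB hpi
  · intro h
    exact dir_mpr S hnd hall hsort L hL0 hLstep h
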